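/- Let G be a finite abelian group carrying a nondegenerate skew-symmetric bicharacter θ with values in an algebraically closed field F of characteristic zero. Let H = {g ∈ G : θ(g,g) = 1}. Then either H = G, in which case |G| is a perfect square, or [G : H] = 2. -/

import Mathlib

/-- A skew-symmetric bicharacter on an abelian group `G` with values in `Fˣ`:
multiplicative in each variable and satisfying `θ(g,h)·θ(h,g) = 1`. -/
structure IsSkewSymmetricBicharacter (F : Type) [Field F] (G : Type) [CommGroup G]
    (θ : G → G → Fˣ) : Prop where
  mul_left : ∀ (g h₁ h₂ : G), θ (h₁ * h₂) g = θ h₁ g * θ h₂ g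
  mul_right : ∀ (g h₁ h₂ : G), θ g (h₁ * h₂) = θ g h₁ * θ g h₂
  skew : ∀ g h : G, θ g h * θ h g = 1

/-- A bicharacter is nondegenerate if every `g ≠ e` pairs nontrivially with some `h`. -/
def BicharNondegenerate {F : Type} [Field F] {G : Type} [CommGroup G]
    (θ : G → G → Fˣ) : Prop :=
  ∀ g : G, g ≠ 1 → ∃ h : G, θ g h ≠ 1

section Aux

variable {F : Type} [Field F] {G : Type} [CommGroup G] {θ : G → G → Fˣ}

/-- The character `θ g ·`. -/
def colHom (hθ : IsSkewSymmetricBicharacter F G θ) (g : G) : G →* Fˣ :=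
  MonoidHom.mk' (fun h => θ g h) (fun h₁ h₂ => hθ.mul_right g h₁ h₂)

@[simp] lemma colHom_apply (hθ : IsSkewSymmetricBicharacter F G θ) (g x : G) :
    colHom hθ g x = θ g x := rfl

/-- The character `θ · h`. -/
def rowHom (hθ : IsSkewSymmetricBicharacter F G θ) (h : G) : G →* Fˣ :=
  MonoidHom.mk' (fun g => θ g h) (fun g₁ g₂ => hθ.mul_left h g₁ g₂)

@[simp] lemma rowHom_apply (hθ : IsSkewSymmetricBicharacter F G θ) (h x : G) :
    rowHom hθ h x = θ x h := rfl

end Aux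

lemma alt_square (F : Type) [Field F] :
    ∀ (n : ℕ) (G : Type) (_ : CommGroup G) (_ : Finite G), Nat.card G = n →
      ∀ θ : G → G → Fˣ, IsSkewSymmetricBicharacter F G θ → BicharNondegenerate θ →
      (∀ g : G, θ g g = 1) → ∃ m : ℕ, n = m * m := by
  intro n
  induction n using Nat.strong_induction_on with
  | _ n ih =>
    intro G _ _ hcard θ hθ hnd halt
    by_cases hG : ∀ g : G, g = 1
    · refine ⟨1, ?_⟩
      have : Nat.card G = 1 := by
        rw [Nat.card_eq_one_iff_unique]
        exact ⟨⟨fun a b => (hG a).trans (hG b).symm⟩, ⟨1⟩⟩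
      omega
    push_neg at hG
    obtain ⟨g₀, hg₀⟩ := hG
    set e := Monoid.exponent G with he
    obtain ⟨g, hg⟩ := Monoid.exists_orderOf_eq_exponent
      (Monoid.ExponentExists.of_finite (G := G))
    rw [← he] at hg
    have hene : e ≠ 0 := Monoid.exponent_ne_zero_of_finite
    have he1 : 1 < e := by
      rcases Nat.lt_or_ge 1 e with hlt | hle
      · exact hlt
      · exfalso
        have he' : e = 1 := by omega
        have h1 : orderOf g₀ ∣ e := Monoid.order_dvd_exponent g₀
        rw [he'] at h1
        exact hg₀ (orderOf_eq_one_iff.mp (Nat.eq_one_of_dvd_one h1))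
    set χ := colHom hθ g with hχ
    haveI : Finite (χ.range) := (Set.finite_range χ).to_subtype
    obtain ⟨ζ', hζ'⟩ := IsCyclic.exists_generator (α := χ.range)
    set ζ : Fˣ := (ζ' : Fˣ) with hζdef
    obtain ⟨h, hh⟩ : ∃ x : G, χ x = ζ := ζ'.2
    have hge : g ^ e = 1 := by rw [← hg]; exact pow_orderOf_eq_one g
    have hhe : h ^ e = 1 := Monoid.pow_exponent_eq_one h
    have hζe : ζ ^ e = 1 := by
      have : ζ ^ e = rowHom hθ h (g ^ e) := by
        rw [map_pow, rowHom_apply, ← hh]; rfl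
      rw [this, hge, map_one]
    have hde : orderOf ζ = e := by
      have hdvd : orderOf ζ ∣ e := orderOf_dvd_of_pow_eq_one hζe
      have hrev : e ∣ orderOf ζ := by
        have hgd : g ^ orderOf ζ = 1 := by
          by_contra hne
          obtain ⟨y, hy⟩ := hnd _ hne
          apply hy
          have hmem : (⟨χ y, ⟨y, rfl⟩⟩ : χ.range) ∈ Subgroup.zpowers ζ' := hζ' _
          obtain ⟨k, hk⟩ := hmem
          have hky : ζ ^ k = θ g y := by
            have := congrArg (Subtype.val) hk
            push_cast at this
            exact (by simpa using this : (ζ' : Fˣ) ^ k = χ y)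
          have h1 : θ (g ^ orderOf ζ) y = (θ g y) ^ orderOf ζ := by
            rw [← rowHom_apply hθ y, map_pow, rowHom_apply]
          rw [h1, ← hky, ← zpow_natCast, ← zpow_mul, mul_comm, zpow_mul,
            zpow_natCast, pow_orderOf_eq_one, one_zpow]
        rw [← hg]
        exact orderOf_dvd_of_pow_eq_one hgd
      exact Nat.dvd_antisymm hdvd hrev
    have hζ1 : ζ ≠ 1 := by
      intro h1
      rw [h1, orderOf_one] at hde
      omega
    have hθgh : θ g h = ζ := hh
    have hθhg : θ h g = ζ⁻¹ := by
      have := hθ.skew g h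
      rw [hθgh] at this
      exact eq_inv_of_mul_eq_one_left (by rwa [mul_comm] at this)
    have horderh : orderOf h = e := by
      have h1 : e ∣ orderOf h := by
        rw [← hde]
        apply orderOf_dvd_of_pow_eq_one
        have : ζ ^ orderOf h = χ (h ^ orderOf h) := by rw [map_pow, hh]
        rw [this, pow_orderOf_eq_one, map_one]
      exact Nat.dvd_antisymm (Monoid.order_dvd_exponent h) h1
    set K : Subgroup G := Subgroup.zpowers g ⊔ Subgroup.zpowers h with hK
    set L : Subgroup G := (colHom hθ g).ker ⊓ (colHom hθ h).ker with hL
    have hmemL : ∀ x : G, x ∈ L ↔ θ g x = 1 ∧ θ h x = 1 := by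
      intro x
      simp [hL, Subgroup.mem_inf, MonoidHom.mem_ker]
    -- e ∣ b whenever ζ ^ b = 1
    have hedvd : ∀ b : ℤ, ζ ^ b = 1 → (e : ℤ) ∣ b := by
      intro b hb
      rw [← hde]
      exact orderOf_dvd_iff_zpow_eq_one.mpr hb
    have hpowe : ∀ (x : G) (b : ℤ), (e : ℤ) ∣ b → x ^ e = 1 → x ^ b = 1 := by
      intro x b hb hx
      obtain ⟨c, rfl⟩ := hb
      rw [zpow_mul, zpow_natCast, hx, one_zpow]
    have hdisjGH : Disjoint (Subgroup.zpowers g) (Subgroup.zpowers h) := by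
      rw [Subgroup.disjoint_def]
      intro x hxg hxh
      obtain ⟨a, ha⟩ := Subgroup.mem_zpowers_iff.mp hxg
      obtain ⟨b, hb⟩ := Subgroup.mem_zpowers_iff.mp hxh
      have h1 : θ g x = 1 := by
        rw [← ha, ← colHom_apply hθ, map_zpow, colHom_apply, halt, one_zpow]
      have h2 : θ g x = ζ ^ b := by
        rw [← hb, ← colHom_apply hθ, map_zpow, colHom_apply, hθgh]
      have := hedvd b (by rw [← h2, h1])
      rw [← hb]
      exact hpowe h b this hhe
    have hdisjKL : Disjoint K L := by
      rw [Subgroup.disjoint_def]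
      intro x hxK hxL
      obtain ⟨y, hy, z, hz, rfl⟩ := Subgroup.mem_sup.mp hxK
      obtain ⟨a, rfl⟩ := Subgroup.mem_zpowers_iff.mp hy
      obtain ⟨b, rfl⟩ := Subgroup.mem_zpowers_iff.mp hz
      obtain ⟨hx1, hx2⟩ := (hmemL _).mp hxL
      have h1 : θ g (g ^ a * h ^ b) = ζ ^ b := by
        rw [← colHom_apply hθ, map_mul, map_zpow, map_zpow, colHom_apply,
          colHom_apply, halt, one_zpow, one_mul, hθgh]
      have hb : (e : ℤ) ∣ b := hedvd b (by rw [← h1, hx1])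
      have hzb : h ^ b = 1 := hpowe h b hb hhe
      rw [hzb, mul_one] at hx2 ⊢
      have h2 : θ h (g ^ a) = ζ⁻¹ ^ a := by
        rw [← colHom_apply hθ, map_zpow, colHom_apply, hθhg]
      have ha : (e : ℤ) ∣ a := by
        apply hedvd a
        have h3 : ζ⁻¹ ^ a = 1 := by rw [← h2, hx2]
        rw [inv_zpow] at h3
        exact inv_eq_one.mp h3
      exact hpowe g a ha hge
    haveI : NeZero e := ⟨hene⟩
    have hprim : IsPrimitiveRoot ((ζ : F)) e := by
      rw [← hde]
      exact IsPrimitiveRoot.coe_units_iff.mpr (IsPrimitiveRoot.orderOf ζ)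
    have hpow_e_one : ∀ x : G, (θ g x) ^ e = 1 ∧ (θ h x) ^ e = 1 := by
      intro x
      constructor
      · have : (θ g x) ^ e = rowHom hθ x (g ^ e) := by rw [map_pow, rowHom_apply]
        rw [this, hge, map_one]
      · have : (θ h x) ^ e = rowHom hθ x (h ^ e) := by rw [map_pow, rowHom_apply]
        rw [this, hhe, map_one]
    have hsurjζ : ∀ u : Fˣ, u ^ e = 1 → ∃ i : ℕ, ζ ^ i = u := by
      intro u hu
      have hu' : ((u : F)) ^ e = 1 := by
        rw [← Units.val_pow_eq_pow_val, hu, Units.val_one]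
      obtain ⟨i, _, hi⟩ := hprim.eq_pow_of_pow_eq_one hu'
      exact ⟨i, Units.ext (by rw [Units.val_pow_eq_pow_val]; exact hi)⟩
    have hsup : K ⊔ L = ⊤ := by
      rw [eq_top_iff]
      intro x _
      obtain ⟨i, hi⟩ := hsurjζ (θ g x) (hpow_e_one x).1
      obtain ⟨j, hj⟩ := hsurjζ (θ h x) (hpow_e_one x).2
      set k := g ^ (-(j : ℤ)) * h ^ (i : ℤ) with hk
      have hkK : k ∈ K := Subgroup.mul_mem_sup
        (Subgroup.mem_zpowers_iff.mpr ⟨-(j : ℤ), rfl⟩)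
        (Subgroup.mem_zpowers_iff.mpr ⟨(i : ℤ), rfl⟩)
      have hθgk : θ g k = ζ ^ (i : ℤ) := by
        rw [← colHom_apply hθ, hk, map_mul, map_zpow, map_zpow, colHom_apply,
          colHom_apply, halt, one_zpow, one_mul, hθgh]
      have hθhk : θ h k = ζ ^ (j : ℤ) := by
        rw [← colHom_apply hθ, hk, map_mul, map_zpow, map_zpow, colHom_apply,
          colHom_apply, halt, one_zpow, mul_one, hθhg, inv_zpow, zpow_neg, inv_inv]
      have hxL : k⁻¹ * x ∈ L := by
        rw [hmemL]
        constructor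
        · rw [← colHom_apply hθ, map_mul, map_inv, colHom_apply, colHom_apply,
            hθgk, ← hi, zpow_natCast, inv_mul_cancel]
        · rw [← colHom_apply hθ, map_mul, map_inv, colHom_apply, colHom_apply,
            hθhk, ← hj, zpow_natCast, inv_mul_cancel]
      have : x = k * (k⁻¹ * x) := by group
      rw [this]
      exact Subgroup.mul_mem_sup hkK hxL
    -- cardinalities
    have cardmul : ∀ (A B : Subgroup G), Disjoint A B →
        Nat.card (A ⊔ B : Subgroup G) = Nat.card A * Nat.card B := by
      intro A B hAB
      have hbij : Function.Bijective
          (fun p : A × B => (⟨(p.1 : G) * p.2, Subgroup.mul_mem_sup p.1.2 p.2.2⟩ :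
            (A ⊔ B : Subgroup G))) := by
        constructor
        · intro p q hpq
          exact Subgroup.mul_injective_of_disjoint hAB (Subtype.ext_iff.mp hpq)
        · rintro ⟨x, hx⟩
          obtain ⟨y, hy, z, hz, rfl⟩ := Subgroup.mem_sup.mp hx
          exact ⟨(⟨y, hy⟩, ⟨z, hz⟩), rfl⟩
      rw [← Nat.card_eq_of_bijective _ hbij, Nat.card_prod]
    have cardK : Nat.card K = e * e := by
      rw [hK, cardmul _ _ hdisjGH, Nat.card_zpowers, Nat.card_zpowers, hg, horderh]
    have cardG : Nat.card G = (e * e) * Nat.card L := by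
      have hcm := cardmul K L hdisjKL
      rw [hsup, Subgroup.card_top] at hcm
      rw [hcm, cardK]
    have hgL : g ∉ L := by
      rw [hmemL]
      rintro ⟨-, h2⟩
      rw [hθhg] at h2
      exact hζ1 (by rw [← inv_inv ζ, h2, inv_one])
    have hLlt : Nat.card L < n := by
      rw [← hcard]
      exact Finite.card_subtype_lt hgL
    -- restricted bicharacter on L
    set θL : L → L → Fˣ := fun x y => θ x y with hθLdef
    have hθL : IsSkewSymmetricBicharacter F L θL :=
      ⟨fun a b c => hθ.mul_left a b c, fun a b c => hθ.mul_right a b c,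
        fun a b => hθ.skew a b⟩
    have hndL : BicharNondegenerate θL := by
      intro x hx1
      have hx1' : (x : G) ≠ 1 := fun hh => hx1 (Subtype.ext hh)
      obtain ⟨y, hy⟩ := hnd x hx1'
      obtain ⟨kk, hkk, l, hl, rfl⟩ := Subgroup.mem_sup.mp (hsup ▸ Subgroup.mem_top y)
      have hswap : ∀ w : G, θ w (x : G) = 1 → θ (x : G) w = 1 := by
        intro w hw
        have := hθ.skew w x
        rw [hw, one_mul] at this
        exact this
      have hxkk : θ (x : G) kk = 1 := by
        obtain ⟨a, ha, b, hb, rfl⟩ := Subgroup.mem_sup.mp hkk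
        obtain ⟨i, rfl⟩ := Subgroup.mem_zpowers_iff.mp ha
        obtain ⟨j, rfl⟩ := Subgroup.mem_zpowers_iff.mp hb
        obtain ⟨hxg, hxh⟩ := (hmemL _).mp x.2
        have h1 : θ (x : G) g = 1 := hswap g hxg
        have h2 : θ (x : G) h = 1 := hswap h hxh
        rw [← colHom_apply hθ, map_mul, map_zpow, map_zpow, colHom_apply,
          colHom_apply, h1, h2, one_zpow, one_zpow, one_mul]
      refine ⟨⟨l, hl⟩, ?_⟩
      have : θ (x : G) l ≠ 1 := by
        intro hc
        apply hy
        rw [← colHom_apply hθ, map_mul, colHom_apply, colHom_apply, hxkk, hc, one_mul]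
      exact this
    have haltL : ∀ x : L, θL x x = 1 := fun x => halt x
    obtain ⟨m, hm⟩ := ih (Nat.card L) hLlt L inferInstance inferInstance rfl θL hθL hndL haltL
    refine ⟨e * m, ?_⟩
    rw [← hcard, cardG, hm]
    ring

/-- for a nondegenerate skew-symmetric bicharacter `θ` on a finite abelian
group `G`, the set `H = {g : θ(g,g) = 1}` is a subgroup, and either `H = G`, in which
case `|G|` is a perfect square, or `[G : H] = 2`. -/
theorem diag_kernel_subgroup (F : Type) [Field F] [IsAlgClosed F] [CharZero F]
    (G : Type) [CommGroup G] [Fintype G] (θ : G → G → Fˣ)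
    (hθ : IsSkewSymmetricBicharacter F G θ) (hnd : BicharNondegenerate θ) :
    ∃ H : Subgroup G, (∀ g : G, g ∈ H ↔ θ g g = 1) ∧
      ((H = ⊤ ∧ ∃ m : ℕ, Fintype.card G = m * m) ∨ H.index = 2) := by
  have qhom : ∀ a b : G, θ (a * b) (a * b) = θ a a * θ b b := by
    intro a b
    rw [hθ.mul_left, hθ.mul_right, hθ.mul_right, mul_assoc, ← mul_assoc (θ a b),
      hθ.skew, one_mul]
  set q : G →* Fˣ := MonoidHom.mk' (fun x => θ x x) qhom with hq
  refine ⟨q.ker, fun g => Iff.rfl, ?_⟩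
  by_cases hall : ∀ g : G, θ g g = 1
  · left
    constructor
    · rw [Subgroup.eq_top_iff']
      intro x
      exact hall x
    · obtain ⟨m, hm⟩ := alt_square F (Nat.card G) G inferInstance inferInstance rfl θ hθ hnd hall
      exact ⟨m, by rw [← Nat.card_eq_fintype_card, hm]⟩
  · right
    push_neg at hall
    obtain ⟨g₀, hg₀⟩ := hall
    have hsq : ∀ x : G, θ x x = 1 ∨ θ x x = -1 := by
      intro x
      have hc : ((θ x x : Fˣ) : F) * ((θ x x : Fˣ) : F) = 1 := by
        have := congrArg Units.val (hθ.skew x x)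
        rwa [Units.val_mul, Units.val_one] at this
      rcases mul_self_eq_one_iff.mp hc with hv | hv
      · left; exact Units.ext (by rw [hv, Units.val_one])
      · right; exact Units.ext (by rw [hv, Units.val_neg, Units.val_one])
    have hrange : (q.range : Set Fˣ) = {1, -1} := by
      ext x
      simp only [SetLike.mem_coe, MonoidHom.mem_range, Set.mem_insert_iff,
        Set.mem_singleton_iff]
      constructor
      · rintro ⟨y, rfl⟩
        exact hsq y
      · rintro (rfl | rfl)
        · exact ⟨1, map_one q⟩
        · exact ⟨g₀, (hsq g₀).resolve_left hg₀⟩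
    have hne : (-1 : Fˣ) ≠ 1 := by
      intro hcontr
      have h1 : ((-1 : Fˣ) : F) = 1 := by rw [hcontr, Units.val_one]
      rw [Units.val_neg, Units.val_one] at h1
      exact two_ne_zero (α := F) (by linear_combination -h1)
    rw [Subgroup.index_ker]
    have : Nat.card q.range = Nat.card ((q.range : Set Fˣ)) := rfl
    rw [this, hrange, Nat.card_coe_set_eq, Set.ncard_pair hne.symm]
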